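/- Let A : Γ^∞(F) → C^∞(M) be an ℝ-linear map. Then there exists a smooth section α of the dual bundle F* → M such that A(X)(x) = α(x)(X(x)) for all X ∈ Γ^∞(F) and all x ∈ M, if and only if A is C^∞(M)-linear, i.e. A(f·X) = f·A(X) for all f ∈ C^∞(M) and X ∈ Γ^∞(F). Moreover, such a section α is unique when it exists. -/

import Mathlib

noncomputable section
open Bundle Set Function Filter
set_option linter.unusedSectionVars false
open scoped Manifold Topology

variable
  {EB : Type*} [NormedAddCommGroup EB] [NormedSpace ℝ EB] [FiniteDimensional ℝ EB]
  {HB : Type*} [TopologicalSpace HB]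
  {IB : ModelWithCorners ℝ EB HB} [IB.Boundaryless]
  {M : Type*} [TopologicalSpace M] [ChartedSpace HB M] [IsManifold IB (⊤ : ℕ∞) M]
  [T2Space M] [SigmaCompactSpace M]
  {F : Type*} [NormedAddCommGroup F] [NormedSpace ℝ F] [FiniteDimensional ℝ F]
  {V : M → Type*} [∀ x, AddCommGroup (V x)] [∀ x, Module ℝ (V x)]
  [∀ x, TopologicalSpace (V x)] [∀ x, IsTopologicalAddGroup (V x)]
  [∀ x, ContinuousSMul ℝ (V x)]
  [TopologicalSpace (Bundle.TotalSpace F V)] [FiberBundle F V] [VectorBundle ℝ F V]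
  [ContMDiffVectorBundle (⊤ : ℕ∞) F V IB]

theorem my_exists_cutoff (x₀ : M) {U : Set M} (hU : IsOpen U) (hx₀ : x₀ ∈ U) :
    ∃ χ : C^(⊤ : ℕ∞)⟮IB, M; ℝ⟯, tsupport ⇑χ ⊆ U ∧ ∀ᶠ y in 𝓝 x₀, χ y = 1 := by
  haveI : LocallyCompactSpace M := Manifold.locallyCompact_of_finiteDimensional IB
  obtain ⟨K, hK, hxK, hKU⟩ := exists_compact_subset hU hx₀
  obtain ⟨K', hK', hxK', hK'K⟩ := exists_compact_subset isOpen_interior hxK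
  obtain ⟨χ, hχ0, hχ1, -⟩ := exists_contMDiffMap_zero_one_of_isClosed IB
    (isOpen_interior (s := K)).isClosed_compl hK'.isClosed
    (disjoint_compl_left.mono_right hK'K)
  refine ⟨χ, ?_, ?_⟩
  · have hsupp : support ⇑χ ⊆ interior K := fun y hy => by
      by_contra h; exact hy (hχ0 h)
    exact (closure_mono hsupp).trans ((closure_minimal interior_subset hK.isClosed).trans hKU)
  · filter_upwards [mem_interior_iff_mem_nhds.mp hxK'] with y hy using hχ1 hy

theorem my_symm_eq (e : Trivialization F (π F V)) [e.IsLinear ℝ] (y : M)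
    (hy : y ∈ e.baseSet) : e.symm y = ⇑(e.symmₗ ℝ y) := (e.coe_symmₗ (R := ℝ) hy).symm

def mySec (e : Trivialization F (π F V)) [MemTrivializationAtlas e] (g : M → F)
    (hg : ContMDiff IB 𝓘(ℝ, F) (⊤ : ℕ∞) g) (hsupp : tsupport g ⊆ e.baseSet) :
    Cₛ^(⊤ : ℕ∞)⟮IB; F, V⟯ where
  toFun y := e.symmₗ ℝ y (g y)
  contMDiff_toFun := by
    intro y₀
    by_cases hy₀ : y₀ ∈ e.baseSet
    · rw [e.contMDiffAt_iff (e.mem_source.mpr hy₀)]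
      refine ⟨contMDiffAt_id, ?_⟩
      refine hg.contMDiffAt.congr_of_eventuallyEq ?_
      filter_upwards [e.open_baseSet.mem_nhds hy₀] with y hy
      exact (congrArg (fun v => (e ⟨y, v⟩).2) (e.symmₗ_apply (R := ℝ) hy (g y))).trans
        (congrArg Prod.snd (e.apply_mk_symm hy (g y)))
    · have h0 : g =ᶠ[𝓝 y₀] 0 :=
        notMem_tsupport_iff_eventuallyEq.mp (fun h => hy₀ (hsupp h))
      refine ((contMDiff_zeroSection ℝ V) y₀).congr_of_eventuallyEq ?_
      filter_upwards [h0] with y hy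
      show TotalSpace.mk' F y (e.symmₗ ℝ y (g y)) = zeroSection F V y
      rw [hy]
      show TotalSpace.mk' F y (e.symmₗ ℝ y 0) = _
      rw [map_zero]
      rfl

@[simp] theorem mySec_apply (e : Trivialization F (π F V)) [MemTrivializationAtlas e] (g : M → F)
    (hg : ContMDiff IB 𝓘(ℝ, F) (⊤ : ℕ∞) g) (hsupp : tsupport g ⊆ e.baseSet) (y : M) :
    mySec e g hg hsupp y = e.symmₗ ℝ y (g y) := rfl
theorem my_sec_sum {ι : Type*} (s : Finset ι) (t : ι → Cₛ^(⊤ : ℕ∞)⟮IB; F, V⟯) (y : M) :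
    (∑ i ∈ s, t i) y = ∑ i ∈ s, t i y := by
  classical
  induction s using Finset.cons_induction with
  | empty => rfl
  | cons a s ha ih =>
      rw [Finset.sum_cons, Finset.sum_cons, ← ih]
      rfl

theorem my_fun_sum {ι : Type*} (s : Finset ι) (t : ι → C^(⊤ : ℕ∞)⟮IB, M; ℝ⟯) (y : M) :
    (∑ i ∈ s, t i) y = ∑ i ∈ s, t i y := by
  classical
  induction s using Finset.cons_induction with
  | empty => rfl
  | cons a s ha ih =>
      rw [Finset.sum_cons, Finset.sum_cons, ← ih]
      rfl

theorem my_loc_zero (A : Cₛ^(⊤ : ℕ∞)⟮IB; F, V⟯ →ₗ[ℝ] C^(⊤ : ℕ∞)⟮IB, M; ℝ⟯)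
    (hA : ∀ (f : C^(⊤ : ℕ∞)⟮IB, M; ℝ⟯) (X Y : Cₛ^(⊤ : ℕ∞)⟮IB; F, V⟯),
        (∀ x : M, Y x = f x • X x) → A Y = f * A X)
    (X : Cₛ^(⊤ : ℕ∞)⟮IB; F, V⟯) (x₀ : M) (hX : ∀ᶠ y in 𝓝 x₀, X y = 0) : A X x₀ = 0 := by
  obtain ⟨O, hOmem, hO⟩ := hX.exists_mem
  obtain ⟨χ, hsupp, hχ1⟩ := my_exists_cutoff (IB := IB) x₀ isOpen_interior
    (mem_interior_iff_mem_nhds.mpr hOmem)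
  set h : C^(⊤ : ℕ∞)⟮IB, M; ℝ⟯ := 1 - χ with hh
  have key : ∀ y, X y = h y • X y := by
    intro y
    by_cases hy : y ∈ tsupport ⇑χ
    · rw [hO y (interior_subset (hsupp hy)), smul_zero]
    · have h0 : χ y = 0 := image_eq_zero_of_notMem_tsupport hy
      have : h y = 1 := by
        show (1 : C^(⊤ : ℕ∞)⟮IB, M; ℝ⟯) y - χ y = 1
        rw [h0]; simp [ContMDiffMap.coe_one]
      rw [this, one_smul]
  have hAX := hA h X X key
  have hx₀1 : χ x₀ = 1 := hχ1.self_of_nhds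
  have := congrArg (fun g : C^(⊤ : ℕ∞)⟮IB, M; ℝ⟯ => g x₀) hAX
  simp only [ContMDiffMap.coe_mul, Pi.mul_apply] at this
  have hhx₀ : h x₀ = 0 := by
    show (1 : C^(⊤ : ℕ∞)⟮IB, M; ℝ⟯) x₀ - χ x₀ = 0
    rw [hx₀1]; simp [ContMDiffMap.coe_one]
  rw [hhx₀, zero_mul] at this
  exact this
theorem my_val_zero (A : Cₛ^(⊤ : ℕ∞)⟮IB; F, V⟯ →ₗ[ℝ] C^(⊤ : ℕ∞)⟮IB, M; ℝ⟯)
    (hA : ∀ (f : C^(⊤ : ℕ∞)⟮IB, M; ℝ⟯) (X Y : Cₛ^(⊤ : ℕ∞)⟮IB; F, V⟯),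
        (∀ x : M, Y x = f x • X x) → A Y = f * A X)
    (X : Cₛ^(⊤ : ℕ∞)⟮IB; F, V⟯) (x₀ : M) (hX0 : X x₀ = 0) : A X x₀ = 0 := by
  classical
  set e := trivializationAt F V x₀ with he
  have hx₀ : x₀ ∈ e.baseSet := mem_baseSet_trivializationAt F V x₀
  obtain ⟨χ, hsupp, hχ1⟩ := my_exists_cutoff (IB := IB) x₀ e.open_baseSet hx₀
  set b := Module.finBasis ℝ F with hb
  -- coordinate functions
  have hXe : ∀ y₀ ∈ e.baseSet, ContMDiffAt IB 𝓘(ℝ, F) (⊤ : ℕ∞) (fun y => (e ⟨y, X y⟩).2) y₀ := by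
    intro y₀ hy₀
    exact ((e.contMDiffAt_iff (e.mem_source.mpr hy₀)).mp (X.contMDiff y₀)).2
  have hc : ∀ i, ContMDiff IB 𝓘(ℝ, ℝ) (⊤ : ℕ∞) (fun y => χ y * b.repr ((e ⟨y, X y⟩).2) i) := by
    intro i y₀
    by_cases hy₀ : y₀ ∈ e.baseSet
    · exact (χ.contMDiff y₀).mul
        (((b.coord i).toContinuousLinearMap.contMDiff.contMDiffAt).comp y₀ (hXe y₀ hy₀))
    · have h0 : ⇑χ =ᶠ[𝓝 y₀] 0 :=
        notMem_tsupport_iff_eventuallyEq.mp (fun h => hy₀ (hsupp h))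
      refine (contMDiffAt_const (c := (0:ℝ))).congr_of_eventuallyEq ?_
      filter_upwards [h0] with y hy
      simp only [Pi.zero_apply] at hy
      simp [hy]
  set C : Fin (Module.finrank ℝ F) → C^(⊤ : ℕ∞)⟮IB, M; ℝ⟯ :=
    fun i => ⟨fun y => χ y * b.repr ((e ⟨y, X y⟩).2) i, hc i⟩ with hC
  have hgsmooth : ∀ v : F, ContMDiff IB 𝓘(ℝ, F) (⊤ : ℕ∞) (fun y => χ y • v) :=
    fun v => χ.contMDiff.smul contMDiff_const
  have hgsupp : ∀ v : F, tsupport (fun y => χ y • v) ⊆ e.baseSet := by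
    intro v
    refine (closure_mono ?_).trans hsupp
    intro y hy
    simp only [mem_support] at hy ⊢
    intro h; exact hy (by rw [h, zero_smul])
  set s : Fin (Module.finrank ℝ F) → Cₛ^(⊤ : ℕ∞)⟮IB; F, V⟯ :=
    fun i => mySec e (fun y => χ y • b i) (hgsmooth (b i)) (hgsupp (b i)) with hs
  have htsmooth : ∀ i, ContMDiff IB 𝓘(ℝ, F) (⊤ : ℕ∞) (fun y => C i y • (χ y • b i)) :=
    fun i => (hc i).smul (hgsmooth (b i))
  have htsupp : ∀ i, tsupport (fun y => C i y • (χ y • b i)) ⊆ e.baseSet := by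
    intro i
    refine (closure_mono ?_).trans hsupp
    intro y hy
    simp only [mem_support] at hy ⊢
    intro h; exact hy (by rw [h, zero_smul, smul_zero])
  set t : Fin (Module.finrank ℝ F) → Cₛ^(⊤ : ℕ∞)⟮IB; F, V⟯ :=
    fun i => mySec e (fun y => C i y • (χ y • b i)) (htsmooth i) (htsupp i) with ht
  have key : ∀ i y, t i y = C i y • s i y := by
    intro i y
    show e.symmₗ ℝ y (C i y • (χ y • b i)) = C i y • e.symmₗ ℝ y (χ y • b i)
    rw [map_smul]
  have hAt : ∀ i, A (t i) = C i * A (s i) := fun i => hA (C i) (s i) (t i) (key i)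
  have hAtx₀ : ∀ i, A (t i) x₀ = 0 := by
    intro i
    have hCx₀ : C i x₀ = 0 := by
      show χ x₀ * b.repr ((e ⟨x₀, X x₀⟩).2) i = 0
      have h2 : (e ⟨x₀, X x₀⟩).2 = 0 := by
        rw [hX0]
        have hl := e.coe_linearMapAt_of_mem (R := ℝ) hx₀
        calc (e ⟨x₀, (0 : V x₀)⟩).2 = e.linearMapAt ℝ x₀ 0 := (congrFun hl 0).symm
          _ = 0 := map_zero _
      rw [h2]
      simp
    rw [hAt i]
    show C i x₀ * A (s i) x₀ = 0
    rw [hCx₀, zero_mul]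
  set T : Cₛ^(⊤ : ℕ∞)⟮IB; F, V⟯ := ∑ i, t i with hT
  have hXT : ∀ᶠ y in 𝓝 x₀, (X - T) y = 0 := by
    filter_upwards [hχ1, e.open_baseSet.mem_nhds hx₀] with y h1 hy
    have hTy : T y = X y := by
      rw [hT, my_sec_sum]
      have hterm : ∀ i, t i y = e.symmₗ ℝ y (b.repr ((e ⟨y, X y⟩).2) i • b i) := by
        intro i
        show e.symmₗ ℝ y ((χ y * b.repr ((e ⟨y, X y⟩).2) i) • (χ y • b i)) = _
        rw [h1, one_mul, one_smul]
      rw [Finset.sum_congr rfl (fun i _ => hterm i), ← map_sum, b.sum_repr, ← my_symm_eq e y hy]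
      exact e.symm_apply_apply_mk hy (X y)
    show X y - T y = 0
    rw [hTy, sub_self]
  have h1 : A (X - T) x₀ = 0 := my_loc_zero A hA (X - T) x₀ hXT
  have h2 : A T x₀ = 0 := by
    rw [hT, map_sum]
    rw [my_fun_sum]
    exact Finset.sum_eq_zero (fun i _ => hAtx₀ i)
  have : A X = A (X - T) + A T := by rw [map_sub]; abel
  rw [this]
  show A (X - T) x₀ + A T x₀ = 0
  rw [h1, h2, add_zero]

theorem my_val_eq (A : Cₛ^(⊤ : ℕ∞)⟮IB; F, V⟯ →ₗ[ℝ] C^(⊤ : ℕ∞)⟮IB, M; ℝ⟯)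
    (hA : ∀ (f : C^(⊤ : ℕ∞)⟮IB, M; ℝ⟯) (X Y : Cₛ^(⊤ : ℕ∞)⟮IB; F, V⟯),
        (∀ x : M, Y x = f x • X x) → A Y = f * A X)
    (X Y : Cₛ^(⊤ : ℕ∞)⟮IB; F, V⟯) (x₀ : M) (hXY : X x₀ = Y x₀) : A X x₀ = A Y x₀ := by
  have h := my_val_zero A hA (X - Y) x₀ (by show X x₀ - Y x₀ = 0; rw [hXY, sub_self])
  rw [map_sub] at h
  have : A X x₀ - A Y x₀ = 0 := h
  linarith
theorem my_contMDiff_sum {ι : Type*} {G' : Type*} [NormedAddCommGroup G'] [NormedSpace ℝ G']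
    (s : Finset ι) (f : ι → M → G') (h : ∀ i ∈ s, ContMDiff IB 𝓘(ℝ, G') (⊤ : ℕ∞) (f i)) :
    ContMDiff IB 𝓘(ℝ, G') (⊤ : ℕ∞) (fun y => ∑ i ∈ s, f i y) := by
  classical
  induction s using Finset.cons_induction with
  | empty => simpa using contMDiff_const (c := (0 : G'))
  | cons a s ha ih =>
      simp only [Finset.sum_cons]
      exact (h a (Finset.mem_cons_self a s)).add
        (ih (fun i hi => h i (Finset.mem_cons_of_mem hi)))

theorem my_exists_sec (x : M) (v : V x) : ∃ X : Cₛ^(⊤ : ℕ∞)⟮IB; F, V⟯, X x = v := by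
  set e := trivializationAt F V x with he
  have hx : x ∈ e.baseSet := mem_baseSet_trivializationAt F V x
  obtain ⟨χ, hsupp, hχ1⟩ := my_exists_cutoff (IB := IB) x e.open_baseSet hx
  have hgsupp : tsupport (fun y => χ y • (e ⟨x, v⟩).2) ⊆ e.baseSet := by
    refine (closure_mono ?_).trans hsupp
    intro y hy
    simp only [mem_support] at hy ⊢
    intro h; exact hy (by rw [h, zero_smul])
  refine ⟨mySec e (fun y => χ y • (e ⟨x, v⟩).2) (χ.contMDiff.smul contMDiff_const) hgsupp, ?_⟩
  show e.symmₗ ℝ x (χ x • (e ⟨x, v⟩).2) = v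
  rw [hχ1.self_of_nhds, one_smul, e.symmₗ_apply (R := ℝ) hx]
  exact e.symm_apply_apply_mk hx v

/-- localization lemma: an `ℝ`-linear map `A : Γ^∞(F) → C^∞(M)` is induced
by a (necessarily unique) smooth section `α` of the dual bundle `F* → M`, via
`A(X)(x) = α(x)(X(x))`, if and only if `A` is `C^∞(M)`-linear. -/
theorem stmt17 (A : Cₛ^(⊤ : ℕ∞)⟮IB; F, V⟯ →ₗ[ℝ] C^(⊤ : ℕ∞)⟮IB, M; ℝ⟯) :
    ((∃ α : Cₛ^(⊤ : ℕ∞)⟮IB; F →L[ℝ] ℝ,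
          (fun x ↦ V x →SL[RingHom.id ℝ] Bundle.Trivial M ℝ x)⟯,
        ∀ (X : Cₛ^(⊤ : ℕ∞)⟮IB; F, V⟯) (x : M), A X x = α x (X x)) ↔
      (∀ (f : C^(⊤ : ℕ∞)⟮IB, M; ℝ⟯) (X Y : Cₛ^(⊤ : ℕ∞)⟮IB; F, V⟯),
        (∀ x : M, Y x = f x • X x) → A Y = f * A X)) ∧
    (∀ α β : Cₛ^(⊤ : ℕ∞)⟮IB; F →L[ℝ] ℝ,
          (fun x ↦ V x →SL[RingHom.id ℝ] Bundle.Trivial M ℝ x)⟯,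
        (∀ (X : Cₛ^(⊤ : ℕ∞)⟮IB; F, V⟯) (x : M), A X x = α x (X x)) →
        (∀ (X : Cₛ^(⊤ : ℕ∞)⟮IB; F, V⟯) (x : M), A X x = β x (X x)) →
        α = β) := by
  classical
  constructor
  · constructor
    · -- existence of α implies C^∞(M)-linearity
      rintro ⟨α, hα⟩ f X Y hXY
      apply DFunLike.ext
      intro x
      rw [hα Y x, hXY x]
      show α x (f x • X x) = (f * A X) x
      rw [map_smul]
      show f x • α x (X x) = f x * A X x
      rw [← hα X x]
      rfl
    · -- C^∞(M)-linearity implies existence of α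
      intro hA
      -- section with prescribed value
      choose secV hsecV using (my_exists_sec (IB := IB) (F := F) (V := V))
      -- the pointwise linear map
      set α₀ : ∀ x, V x →ₗ[ℝ] ℝ := fun x =>
        { toFun := fun v => A (secV x v) x
          map_add' := fun v w => by
            show A (secV x (v + w)) x = A (secV x v) x + A (secV x w) x
            have h1 : A (secV x (v + w)) x = A (secV x v + secV x w) x :=
              my_val_eq A hA _ _ x (by
                show secV x (v + w) x = (secV x v + secV x w) x
                show secV x (v + w) x = secV x v x + secV x w x
                rw [hsecV, hsecV, hsecV])
            rw [h1, map_add]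
            rfl
          map_smul' := fun c v => by
            show A (secV x (c • v)) x = c • A (secV x v) x
            have h1 : A (secV x (c • v)) x = A (c • secV x v) x :=
              my_val_eq A hA _ _ x (by
                show secV x (c • v) x = (c • secV x v) x
                show secV x (c • v) x = c • secV x v x
                rw [hsecV, hsecV])
            rw [h1, map_smul]
            rfl } with hα₀
      have hcont : ∀ x, Continuous (α₀ x) := by
        intro x
        have hx : x ∈ (trivializationAt F V x).baseSet := mem_baseSet_trivializationAt F V x
        let φ : V x ≃L[ℝ] F := (trivializationAt F V x).continuousLinearEquivAt ℝ x hx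
        haveI : T2Space (V x) := φ.toHomeomorph.isEmbedding.t2Space
        haveI : FiniteDimensional ℝ (V x) := FiniteDimensional.of_injective
          φ.toLinearEquiv.toLinearMap φ.toLinearEquiv.injective
        exact (α₀ x).continuous_of_finiteDimensional
      set αf : ∀ x, V x →SL[RingHom.id ℝ] Bundle.Trivial M ℝ x :=
        fun x => ⟨α₀ x, hcont x⟩ with hαf
      have hAα : ∀ (X : Cₛ^(⊤ : ℕ∞)⟮IB; F, V⟯) (x : M), A X x = αf x (X x) :=
        fun X x => my_val_eq A hA X _ x (hsecV x (X x)).symm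
      -- smoothness of αf
      have hsmooth : ContMDiff IB (IB.prod 𝓘(ℝ, F →L[ℝ] ℝ)) (⊤ : ℕ∞)
          (fun x => TotalSpace.mk' (F →L[ℝ] ℝ) x (αf x)) := by
        intro x₀
        rw [contMDiffAt_section]
        set e := trivializationAt F V x₀ with he
        have hx₀ : x₀ ∈ e.baseSet := mem_baseSet_trivializationAt F V x₀
        obtain ⟨χ, hsupp, hχ1⟩ := my_exists_cutoff (IB := IB) x₀ e.open_baseSet hx₀
        set b := Module.finBasis ℝ F with hb
        set coordL : Fin (Module.finrank ℝ F) → (F →L[ℝ] ℝ) :=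
          fun i => (b.coord i).toContinuousLinearMap with hcoordL
        have hgsupp : ∀ v : F, tsupport (fun y => χ y • v) ⊆ e.baseSet := by
          intro v
          refine (closure_mono ?_).trans hsupp
          intro y hy
          simp only [mem_support] at hy ⊢
          intro h; exact hy (by rw [h, zero_smul])
        set s : Fin (Module.finrank ℝ F) → Cₛ^(⊤ : ℕ∞)⟮IB; F, V⟯ :=
          fun i => mySec e (fun y => χ y • b i) (χ.contMDiff.smul contMDiff_const)
            (hgsupp (b i)) with hs
        have hG : ContMDiff IB 𝓘(ℝ, F →L[ℝ] ℝ) (⊤ : ℕ∞)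
            (fun y => ∑ i, (A (s i) y) • coordL i) :=
          my_contMDiff_sum _ _ (fun i _ => (A (s i)).contMDiff.smul contMDiff_const)
        refine (hG x₀).congr_of_eventuallyEq ?_
        filter_upwards [hχ1, e.open_baseSet.mem_nhds hx₀] with y h1 hy
        show ((trivializationAt ℝ (Bundle.Trivial M ℝ) x₀).continuousLinearMapAt ℝ y).comp
            ((αf y : V y →L[ℝ] ℝ).comp (e.symmL ℝ y)) = ∑ i, (A (s i) y) • coordL i
        ext w
        have hw : (e.symm y w : V y) = ∑ i, b.repr w i • s i y := by
          have hterm : ∀ i, b.repr w i • (s i y : V y) = e.symmₗ ℝ y (b.repr w i • b i) := by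
            intro i
            show b.repr w i • e.symmₗ ℝ y (χ y • b i) = _
            rw [h1, one_smul, map_smul]
          rw [Finset.sum_congr rfl (fun i _ => hterm i), ← map_sum, b.sum_repr, my_symm_eq e y hy]
        have hαval : (αf y : V y →L[ℝ] ℝ) (e.symm y w) = ∑ i, b.repr w i * A (s i) y := by
          rw [hw, map_sum]
          refine Finset.sum_congr rfl fun i _ => ?_
          rw [map_smul, ← hAα (s i) y]
          rfl
        have he₂ : ∀ r : ℝ,
            (trivializationAt ℝ (Bundle.Trivial M ℝ) x₀).continuousLinearMapAt ℝ y r = r := by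
          intro r
          have hmem : y ∈ (trivializationAt ℝ (Bundle.Trivial M ℝ) x₀).baseSet :=
            mem_baseSet_trivializationAt ℝ (Bundle.Trivial M ℝ) y
          rw [Trivialization.continuousLinearMapAt_apply,
            Trivialization.coe_linearMapAt_of_mem _ hmem]
          rfl
        rw [ContinuousLinearMap.comp_apply, ContinuousLinearMap.comp_apply]
        rw [show (e.symmL ℝ y) w = e.symm y w from e.symmL_apply (R := ℝ) hy w]
        rw [he₂, hαval]
        rw [ContinuousLinearMap.sum_apply]
        refine Finset.sum_congr rfl fun i _ => ?_
        rw [ContinuousLinearMap.smul_apply]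
        show b.repr w i * A (s i) y = A (s i) y • (b.coord i).toContinuousLinearMap w
        rw [LinearMap.coe_toContinuousLinearMap', Module.Basis.coord_apply, smul_eq_mul, mul_comm]
      exact ⟨⟨αf, hsmooth⟩, fun X x => hAα X x⟩
  · -- uniqueness
    intro α β hα hβ
    apply ContMDiffSection.ext
    intro x
    apply ContinuousLinearMap.ext
    intro v
    obtain ⟨X, hX⟩ := my_exists_sec (IB := IB) (F := F) x v
    rw [← hX, ← hα X x, hβ X x]
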